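/- Entropy dissipation identity: for a strictly positive pmf p with finite entropy sums, ∑_{n≥0} L[p]_n·log p_n = -∑_{n≥0}(r̄·p_n - p_{n+1})·(log(r̄·p_n) - log p_{n+1}), where r̄ = 1 - p_0 ∈ (0,1). In particular ∑ L[p]_n·log p_n ≤ 0. -/

import Mathlib

noncomputable def Lop (p : ℕ → ℝ) : ℕ → ℝ := fun n : ℕ =>
  if n = 0 then p 1 - (1 - p 0) * p 0
  else p (n + 1) + (1 - p 0) * p (n - 1) - (1 + (1 - p 0)) * p n

noncomputable def aaED (p : ℕ → ℝ) (n : ℕ) : ℝ := (1 - p 0) * p n - p (n + 1)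
noncomputable def bbED (p : ℕ → ℝ) (n : ℕ) : ℝ := aaED p n * Real.log (p (n + 1))
noncomputable def bbED' (p : ℕ → ℝ) : ℕ → ℝ
  | 0 => 0
  | (n + 1) => bbED p n
noncomputable def ggED (p : ℕ → ℝ) (n : ℕ) : ℝ :=
  aaED p n * (Real.log ((1 - p 0) * p n) - Real.log (p (n + 1)))
noncomputable def ffED (p : ℕ → ℝ) (n : ℕ) : ℝ := Lop p n * Real.log (p n)

lemma phiED_eq (p : ℕ → ℝ) (hpos : ∀ n, 0 < p n) (hr0 : 0 < 1 - p 0) (n : ℕ) :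
    ffED p n + ggED p n - Real.log (1 - p 0) * aaED p n = bbED' p n - bbED' p (n + 1) := by
  have hlog : ∀ m, Real.log ((1 - p 0) * p m) = Real.log (1 - p 0) + Real.log (p m) :=
    fun m => Real.log_mul hr0.ne' (hpos m).ne'
  cases n with
  | zero =>
    have hL0 : Lop p 0 = p 1 - (1 - p 0) * p 0 := by simp [Lop]
    simp only [ffED, ggED, aaED, bbED', bbED, hL0, hlog]
    ring
  | succ k =>
    have hL : Lop p (k + 1) = p (k + 2) + (1 - p 0) * p k - (1 + (1 - p 0)) * p (k + 1) := by
      simp [Lop]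
    simp only [ffED, ggED, aaED, bbED', bbED, hL, hlog]
    ring

lemma xlogx_le {x : ℝ} (hx : 0 < x) (hx1 : x ≤ 1) : x * |Real.log x| ≤ 2 * Real.sqrt x := by
  have hs : 0 < Real.sqrt x := Real.sqrt_pos.2 hx
  have h1 : Real.log ((Real.sqrt x)⁻¹) ≤ (Real.sqrt x)⁻¹ - 1 :=
    Real.log_le_sub_one_of_pos (by positivity)
  have h2 : -Real.log x ≤ 2 * (Real.sqrt x)⁻¹ := by
    rw [Real.log_inv] at h1
    have := Real.log_sqrt hx.le
    nlinarith [Real.sqrt_nonneg x]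
  have habs : |Real.log x| = -Real.log x := abs_of_nonpos (Real.log_nonpos hx.le hx1)
  rw [habs]
  calc x * -Real.log x ≤ x * (2 * (Real.sqrt x)⁻¹) := mul_le_mul_of_nonneg_left h2 hx.le
    _ = 2 * (x / Real.sqrt x) := by ring
    _ = 2 * Real.sqrt x := by rw [Real.div_sqrt]

theorem entropy_dissipation (p : ℕ → ℝ) (hpos : ∀ n, 0 < p n)
    (hsum : Summable p) (htot : ∑' n : ℕ, p n = 1)
    (hmean : Summable (fun n : ℕ => (n : ℝ) * p n))
    (hr0 : 0 < 1 - p 0) (hr1 : 1 - p 0 < 1)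
    (habs1 : Summable (fun n : ℕ => |Lop p n * Real.log (p n)|))
    (habs2 : Summable (fun n : ℕ =>
      |((1 - p 0) * p n - p (n + 1)) * (Real.log ((1 - p 0) * p n) - Real.log (p (n + 1)))|)) :
    (∑' n : ℕ, Lop p n * Real.log (p n)
        = -∑' n : ℕ, ((1 - p 0) * p n - p (n + 1)) *
            (Real.log ((1 - p 0) * p n) - Real.log (p (n + 1))))
      ∧ ∑' n : ℕ, Lop p n * Real.log (p n) ≤ 0 := by
  have hsum1 : Summable (fun n => p (n + 1)) := (summable_nat_add_iff 1).2 hsum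
  have hf : Summable (ffED p) := habs1.of_abs
  have hg : Summable (ggED p) := habs2.of_abs
  have ha : Summable (aaED p) := (hsum.mul_left (1 - p 0)).sub hsum1
  have hple : ∀ n, p n ≤ 1 := by
    intro n
    rw [← htot]
    exact Summable.le_tsum hsum n (fun m _ => (hpos m).le)
  -- sum of a is zero
  have htp1 : ∑' n, p (n + 1) = 1 - p 0 := by
    have h := Summable.tsum_eq_zero_add hsum
    rw [htot] at h
    linarith
  have htsa : ∑' n, aaED p n = 0 := by
    have h : ∑' n, aaED p n = (1 - p 0) * (∑' n, p n) - ∑' n, p (n + 1) := by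
      rw [← tsum_mul_left, ← Summable.tsum_sub (hsum.mul_left _) hsum1]
      rfl
    rw [h, htot, htp1]; ring
  -- partial sums telescope
  set T : ℝ := ∑' n, (ffED p n + ggED p n - Real.log (1 - p 0) * aaED p n) with hTdef
  have hφsum : Summable (fun n => ffED p n + ggED p n - Real.log (1 - p 0) * aaED p n) :=
    (hf.add hg).sub (ha.mul_left _)
  have hpart : ∀ N, ∑ n ∈ Finset.range N,
      (ffED p n + ggED p n - Real.log (1 - p 0) * aaED p n) = -bbED' p N := by
    intro N
    calc ∑ n ∈ Finset.range N, (ffED p n + ggED p n - Real.log (1 - p 0) * aaED p n)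
        = ∑ n ∈ Finset.range N, (bbED' p n - bbED' p (n + 1)) :=
          Finset.sum_congr rfl (fun n _ => phiED_eq p hpos hr0 n)
      _ = bbED' p 0 - bbED' p N := Finset.sum_range_sub' _ N
      _ = -bbED' p N := by simp [bbED']
  have hT : Filter.Tendsto (fun N => ∑ n ∈ Finset.range N,
      (ffED p n + ggED p n - Real.log (1 - p 0) * aaED p n)) Filter.atTop (nhds T) :=
    hφsum.hasSum.tendsto_sum_nat
  have hb' : Filter.Tendsto (bbED' p) Filter.atTop (nhds (-T)) := by
    have h1 : Filter.Tendsto (fun N => -bbED' p N) Filter.atTop (nhds T) := hT.congr hpart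
    have h2 := h1.neg
    simpa using h2
  have hb : Filter.Tendsto (bbED p) Filter.atTop (nhds (-T)) :=
    (hb'.comp (Filter.tendsto_add_atTop_nat 1)).congr (fun n => rfl)
  -- limits
  have hg0 : Filter.Tendsto (ggED p) Filter.atTop (nhds 0) := hg.tendsto_atTop_zero
  have ha0 : Filter.Tendsto (aaED p) Filter.atTop (nhds 0) := ha.tendsto_atTop_zero
  have hp0 : Filter.Tendsto p Filter.atTop (nhds 0) := hsum.tendsto_atTop_zero
  have hbp : Filter.Tendsto (fun n => aaED p n * Real.log (p n)) Filter.atTop (nhds (-T)) := by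
    have heq : ∀ n, aaED p n * Real.log (p n)
        = ggED p n + bbED p n - Real.log (1 - p 0) * aaED p n := by
      intro n
      simp only [ggED, bbED]
      rw [Real.log_mul hr0.ne' (hpos n).ne']
      ring
    have h1 := (hg0.add hb).sub (ha0.const_mul (Real.log (1 - p 0)))
    have h2 := h1.congr (fun n => (heq n).symm)
    simpa using h2
  have hsq : Filter.Tendsto (fun n => 2 * Real.sqrt (p n)) Filter.atTop (nhds 0) := by
    have h1 : Filter.Tendsto (fun n => Real.sqrt (p n)) Filter.atTop (nhds 0) := by
      have := (Real.continuous_sqrt.tendsto 0).comp hp0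
      simpa [Function.comp_def] using this
    simpa using h1.const_mul 2
  have hsq1 : Filter.Tendsto (fun n => 2 * Real.sqrt (p (n + 1))) Filter.atTop (nhds 0) :=
    (hsq.comp (Filter.tendsto_add_atTop_nat 1)).congr (fun n => rfl)
  -- the limit -T is zero
  have hT0 : T = 0 := by
    by_contra hne
    rcases (neg_ne_zero.mpr hne).lt_or_gt with hLneg | hLpos
    · -- -T < 0 : use a n * log p n → -T
      have hev1 : ∀ᶠ n in Filter.atTop, aaED p n * Real.log (p n) < -T / 2 :=
        hbp.eventually_lt_const (by linarith)
      have hev2 : ∀ᶠ n in Filter.atTop, 2 * Real.sqrt (p n) < -(-T / 2) :=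
        hsq.eventually_lt_const (by linarith)
      obtain ⟨n, h1, h2⟩ := (hev1.and hev2).exists
      have hlogn : Real.log (p n) ≤ 0 := Real.log_nonpos (hpos n).le (hple n)
      have hapos : 0 < aaED p n := by
        by_contra h
        push_neg at h
        have h2 := mul_nonneg (neg_nonneg.2 h) (neg_nonneg.2 hlogn)
        rw [neg_mul_neg] at h2
        linarith [h2]
      have hale : aaED p n ≤ p n := by
        simp only [aaED]
        nlinarith [hpos n, hpos (n + 1)]
      have hub : aaED p n * |Real.log (p n)| ≤ p n * |Real.log (p n)| :=
        mul_le_mul_of_nonneg_right hale (abs_nonneg _)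
      have hxx := xlogx_le (hpos n) (hple n)
      have habs : aaED p n * |Real.log (p n)| = -(aaED p n * Real.log (p n)) := by
        rw [abs_of_nonpos hlogn]; ring
      linarith
    · -- 0 < -T : use b
      have hev1 : ∀ᶠ n in Filter.atTop, -T / 2 < bbED p n :=
        hb.eventually_const_lt (by linarith)
      have hev2 : ∀ᶠ n in Filter.atTop, 2 * Real.sqrt (p (n + 1)) < -T / 2 :=
        hsq1.eventually_lt_const (by linarith)
      obtain ⟨n, h1, h2⟩ := (hev1.and hev2).exists
      have hlogn : Real.log (p (n + 1)) ≤ 0 := Real.log_nonpos (hpos _).le (hple _)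
      have haneg : aaED p n < 0 := by
        by_contra h
        push_neg at h
        have : aaED p n * Real.log (p (n + 1)) ≤ 0 := mul_nonpos_of_nonneg_of_nonpos h hlogn
        simp only [bbED] at h1
        linarith
      have hale : -aaED p n ≤ p (n + 1) := by
        simp only [aaED]
        nlinarith [mul_pos hr0 (hpos n)]
      have hub : (-aaED p n) * |Real.log (p (n + 1))| ≤ p (n + 1) * |Real.log (p (n + 1))| :=
        mul_le_mul_of_nonneg_right hale (abs_nonneg _)
      have hxx := xlogx_le (hpos (n + 1)) (hple (n + 1))
      have habs : (-aaED p n) * |Real.log (p (n + 1))| = aaED p n * Real.log (p (n + 1)) := by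
        rw [abs_of_nonpos hlogn]; ring
      simp only [bbED] at h1
      linarith
  -- conclude
  have hsplit : T = (∑' n, ffED p n) + (∑' n, ggED p n)
      - Real.log (1 - p 0) * ∑' n, aaED p n := by
    rw [hTdef, Summable.tsum_sub (hf.add hg) (ha.mul_left _), Summable.tsum_add hf hg, tsum_mul_left]
  have hmain : (∑' n, ffED p n) = -(∑' n, ggED p n) := by
    rw [htsa] at hsplit
    rw [hT0] at hsplit
    linarith
  have hgnn : ∀ n, 0 ≤ ggED p n := by
    intro n
    simp only [ggED, aaED]
    rcases le_total (p (n + 1)) ((1 - p 0) * p n) with h | h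
    · have hl : Real.log (p (n + 1)) ≤ Real.log ((1 - p 0) * p n) :=
        Real.log_le_log (hpos (n + 1)) h
      exact mul_nonneg (sub_nonneg.mpr h) (sub_nonneg.mpr hl)
    · have hl : Real.log ((1 - p 0) * p n) ≤ Real.log (p (n + 1)) :=
        Real.log_le_log (mul_pos hr0 (hpos n)) h
      have h2 := mul_nonneg (by linarith : (0:ℝ) ≤ -((1 - p 0) * p n - p (n + 1)))
        (by linarith : (0:ℝ) ≤ -(Real.log ((1 - p 0) * p n) - Real.log (p (n + 1))))
      rw [neg_mul_neg] at h2
      exact h2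
  have hgs : 0 ≤ ∑' n, ggED p n := tsum_nonneg hgnn
  constructor
  · exact hmain
  · show (∑' n, ffED p n) ≤ 0
    rw [hmain]
    linarith
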